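/- Let f : ℝ^{n×m} → ℝ be differentiable with L-Lipschitz gradient with respect to the Frobenius norm, let C be a convex set of entrywise nonnegative n×m matrices each having total entry sum 1, let π ∈ C have all entries positive, and let 0 < η. If π⁺ ∈ C minimizes ρ ↦ ⟨∇f(π), ρ⟩ + (1/η)·KL(ρ‖π) over C, then f(π) − f(π⁺) ≥ (1/(2η) − L/2)·‖π⁺ − π‖_F². In particular, if 0 < η < 1/L then the KL-proximal (entropic mirror) update strictly decreases f unless π⁺ = π. -/

import Mathlib

open scoped RealInnerProductSpace BigOperators

/-- The Kullback–Leibler divergence between two `n×m` arrays (viewed as elements of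
Euclidean space with the Frobenius norm):
`KL(P‖Q) = Σ_p (P_p log(P_p/Q_p) − P_p + Q_p)` (with the convention `0·log 0 = 0`,
automatic since `Real.log 0 = 0`). -/
noncomputable def vecKL {ι : Type*} [Fintype ι] (P Q : ι → ℝ) : ℝ :=
  ∑ p, (P p * Real.log (P p / Q p) - P p + Q p)

/-- Helper function for the pointwise KL inequality. -/
noncomputable def klAux (b t : ℝ) : ℝ :=
  t * Real.log t - t * Real.log b - t + b - (t - b) ^ 2 / 2

lemma klAux_continuous (b : ℝ) : Continuous (klAux b) := by
  unfold klAux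
  have h := Real.continuous_mul_log
  fun_prop

lemma klAux_hasDerivAt (b : ℝ) {t : ℝ} (ht : t ≠ 0) :
    HasDerivAt (klAux b) (Real.log t - Real.log b - (t - b)) t := by
  have h1 : HasDerivAt (fun x : ℝ => x * Real.log x) (Real.log t + 1) t :=
    Real.hasDerivAt_mul_log ht
  have h2 : HasDerivAt (fun x : ℝ => x * Real.log b) (Real.log b) t := by
    simpa using (hasDerivAt_id t).mul_const (Real.log b)
  have h3 : HasDerivAt (fun x : ℝ => (x - b) ^ 2 / 2) ((t - b)) t := by
    have : HasDerivAt (fun x : ℝ => (x - b) ^ 2) (2 * (t - b) ^ 1 * 1) t := by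
      exact (((hasDerivAt_id t).sub_const b).pow 2)
    have h4 := this.div_const 2
    simpa using h4
  have := (((h1.sub h2).sub (hasDerivAt_id t)).add_const b).sub h3
  exact this.congr_deriv (by ring)

lemma klAux_at_b {b : ℝ} : klAux b b = 0 := by simp [klAux]

/-- Pointwise KL bound: for `0 ≤ a ≤ 1` and `0 < b ≤ 1`,
`a log(a/b) − a + b ≥ (a−b)²/2`. -/
lemma kl_pointwise {a b : ℝ} (ha : 0 ≤ a) (ha1 : a ≤ 1) (hb : 0 < b) (hb1 : b ≤ 1) :
    (a - b) ^ 2 / 2 ≤ a * Real.log (a / b) - a + b := by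
  have hlog : a * Real.log (a / b) = a * Real.log a - a * Real.log b := by
    rcases eq_or_ne a 0 with rfl | ha0
    · simp
    · rw [Real.log_div ha0 hb.ne', mul_sub]
  rw [hlog]
  have key : 0 ≤ klAux b a := by
    rcases le_total a b with hab | hab
    · -- antitone on [0, b]
      have hanti : AntitoneOn (klAux b) (Set.Icc 0 b) := by
        apply antitoneOn_of_deriv_nonpos (convex_Icc 0 b)
          (klAux_continuous b).continuousOn
        · intro t ht
          rw [interior_Icc] at ht
          exact (klAux_hasDerivAt b ht.1.ne').differentiableAt.differentiableWithinAt
        · intro t ht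
          rw [interior_Icc] at ht
          rw [(klAux_hasDerivAt b ht.1.ne').deriv]
          have hlt : Real.log t - Real.log b ≤ (t - b) / b := by
            rw [← Real.log_div ht.1.ne' hb.ne']
            have := Real.log_le_sub_one_of_pos (div_pos ht.1 hb)
            calc Real.log (t / b) ≤ t / b - 1 := this
              _ = (t - b) / b := by field_simp
          have h2 : (t - b) / b ≤ t - b := by
            rw [div_le_iff₀ hb]
            nlinarith [ht.2]
          linarith
      have := hanti (Set.mem_Icc.mpr ⟨ha, hab⟩) (Set.mem_Icc.mpr ⟨hb.le, le_rfl⟩) hab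
      rw [klAux_at_b] at this
      linarith
    · -- monotone on [b, 1]
      have hmono : MonotoneOn (klAux b) (Set.Icc b 1) := by
        apply monotoneOn_of_deriv_nonneg (convex_Icc b 1)
          (klAux_continuous b).continuousOn
        · intro t ht
          rw [interior_Icc] at ht
          exact (klAux_hasDerivAt b (hb.trans ht.1).ne').differentiableAt.differentiableWithinAt
        · intro t ht
          rw [interior_Icc] at ht
          have htpos : 0 < t := hb.trans ht.1
          rw [(klAux_hasDerivAt b htpos.ne').deriv]
          have hlt : Real.log b - Real.log t ≤ (b - t) / t := by
            rw [← Real.log_div hb.ne' htpos.ne']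
            have := Real.log_le_sub_one_of_pos (div_pos hb htpos)
            calc Real.log (b / t) ≤ b / t - 1 := this
              _ = (b - t) / t := by field_simp
          have h2 : (b - t) / t ≤ 0 := div_nonpos_of_nonpos_of_nonneg
            (by linarith [ht.1]) htpos.le
          have h3 : t - b ≤ (t - b) / t := by
            rw [le_div_iff₀ htpos]
            nlinarith [ht.1, ht.2]
          have h4 : (t - b) / t ≤ Real.log t - Real.log b := by
            have hh : (t - b) / t = -((b - t) / t) := by ring
            rw [hh]
            linarith
          linarith
      have := hmono (Set.mem_Icc.mpr ⟨le_rfl, hb1⟩) (Set.mem_Icc.mpr ⟨hab, ha1⟩) hab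
      rw [klAux_at_b] at this
      linarith
  unfold klAux at key
  linarith

/-- Descent lemma: an everywhere-differentiable function with `L`-Lipschitz gradient
satisfies `f y ≤ f x + ⟪∇f x, y − x⟫ + (L/2)‖y − x‖²`. -/
lemma descent_lemma {ι : Type*} [Fintype ι]
    (f : EuclideanSpace ℝ ι → ℝ) (L : ℝ) (hL : 0 < L)
    (hdiff : Differentiable ℝ f)
    (hlip : ∀ x y, ‖gradient f x - gradient f y‖ ≤ L * ‖x - y‖)
    (x y : EuclideanSpace ℝ ι) :
    f y ≤ f x + ⟪gradient f x, y - x⟫ + L / 2 * ‖y - x‖ ^ 2 := by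
  set v := y - x with hv
  -- gradient is continuous
  have hgradcont : Continuous (gradient f) := by
    have : LipschitzWith L.toNNReal (gradient f) := by
      apply LipschitzWith.of_dist_le_mul
      intro a b
      rw [dist_eq_norm, dist_eq_norm, Real.coe_toNNReal L hL.le]
      exact hlip a b
    exact this.continuous
  -- the curve
  set c : ℝ → EuclideanSpace ℝ ι := fun t => x + t • v with hc
  have hccont : Continuous c :=
    continuous_const.add (continuous_id.smul continuous_const)
  have hcderiv : ∀ t : ℝ, HasDerivAt c v t := by
    intro t
    have : HasDerivAt (fun s : ℝ => s • v) v t := by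
      simpa using (hasDerivAt_id t).smul_const v
    simpa [hc] using this.const_add x
  set g' : ℝ → ℝ := fun t => ⟪gradient f (c t), v⟫ with hg'
  have hgderiv : ∀ t : ℝ, HasDerivAt (fun s => f (c s)) (g' t) t := by
    intro t
    have hf : HasFDerivAt f ((InnerProductSpace.toDual ℝ _) (gradient f (c t))) (c t) :=
      (hdiff (c t)).hasGradientAt.hasFDerivAt
    have := hf.comp_hasDerivAt t (hcderiv t)
    simpa [hg', InnerProductSpace.toDual_apply_apply, Function.comp_def] using this
  have hg'cont : Continuous g' := by
    apply Continuous.inner (hgradcont.comp hccont) continuous_const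
  have hint : IntervalIntegrable g' MeasureTheory.volume 0 1 :=
    hg'cont.intervalIntegrable 0 1
  have hftc : ∫ t in (0:ℝ)..1, g' t = f (c 1) - f (c 0) :=
    intervalIntegral.integral_eq_sub_of_hasDerivAt (fun t _ => hgderiv t) hint
  have hc0 : c 0 = x := by simp [hc]
  have hc1 : c 1 = y := by simp [hc, hv]
  -- pointwise bound on the derivative
  have hbound : ∀ t ∈ Set.Icc (0:ℝ) 1, g' t ≤ g' 0 + L * t * ‖v‖ ^ 2 := by
    intro t ht
    have h1 : g' t - g' 0 = ⟪gradient f (c t) - gradient f (c 0), v⟫ := by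
      rw [inner_sub_left]
    have h2 : ⟪gradient f (c t) - gradient f (c 0), v⟫ ≤
        ‖gradient f (c t) - gradient f (c 0)‖ * ‖v‖ :=
      real_inner_le_norm _ _
    have h3 : ‖gradient f (c t) - gradient f (c 0)‖ ≤ L * ‖c t - c 0‖ := hlip _ _
    have h4 : c t - c 0 = t • v := by simp [hc]
    have h5 : ‖c t - c 0‖ = t * ‖v‖ := by
      rw [h4, norm_smul, Real.norm_eq_abs, abs_of_nonneg ht.1]
    have h6 : ‖gradient f (c t) - gradient f (c 0)‖ * ‖v‖ ≤ L * t * ‖v‖ * ‖v‖ := by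
      apply mul_le_mul_of_nonneg_right _ (norm_nonneg v)
      calc ‖gradient f (c t) - gradient f (c 0)‖ ≤ L * ‖c t - c 0‖ := h3
        _ = L * t * ‖v‖ := by rw [h5]; ring
    nlinarith [h1, h2, h6]
  -- integrate the bound
  have hintbound : ∫ t in (0:ℝ)..1, g' t ≤ ∫ t in (0:ℝ)..1, (g' 0 + L * t * ‖v‖ ^ 2) := by
    apply intervalIntegral.integral_mono_on zero_le_one hint
    · exact (continuous_const.add ((continuous_const.mul continuous_id).mul
        continuous_const)).intervalIntegrable 0 1
    · exact hbound
  have hrhs : ∫ t in (0:ℝ)..1, (g' 0 + L * t * ‖v‖ ^ 2) = g' 0 + L / 2 * ‖v‖ ^ 2 := by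
    have hcongr : ∫ t in (0:ℝ)..1, (g' 0 + L * t * ‖v‖ ^ 2)
        = ∫ t in (0:ℝ)..1, (g' 0 + (L * ‖v‖ ^ 2) * t) := by
      apply intervalIntegral.integral_congr
      intro t _
      ring
    rw [hcongr, intervalIntegral.integral_add
      ((continuous_const : Continuous fun _ : ℝ => g' 0).intervalIntegrable 0 1)
      ((by fun_prop : Continuous fun t : ℝ => L * ‖v‖ ^ 2 * t).intervalIntegrable 0 1),
      intervalIntegral.integral_const_mul, integral_id, intervalIntegral.integral_const]
    simp
    ring
  have hg'0 : g' 0 = ⟪gradient f x, v⟫ := by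
    have h0 : g' 0 = ⟪gradient f (c 0), v⟫ := rfl
    rw [h0, hc0]
  rw [hc0, hc1] at hftc
  have hfin : ∫ t in (0:ℝ)..1, g' t ≤ g' 0 + L / 2 * ‖v‖ ^ 2 := hintbound.trans_eq hrhs
  linarith [hftc, hfin, hg'0.le, hg'0.ge]

/-- Sufficient decrease of the KL-proximal (entropic mirror) update:
if `f` is differentiable with `L`-Lipschitz gradient (Frobenius norm), `C` is a convex
set of entrywise nonnegative `n×m` matrices of unit total mass, `π ∈ C` is entrywise
positive, and `π⁺ ∈ C` minimizes `ρ ↦ ⟨∇f(π), ρ⟩ + (1/η)·KL(ρ‖π)` over `C`, then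
`f(π) − f(π⁺) ≥ (1/(2η) − L/2)‖π⁺ − π‖_F²`; in particular, if `0 < η < 1/L` the
update strictly decreases `f` unless `π⁺ = π`. -/
theorem kl_prox_sufficient_decrease (n m : ℕ)
    (f : EuclideanSpace ℝ (Fin n × Fin m) → ℝ) (L : ℝ) (hL : 0 < L)
    (hdiff : Differentiable ℝ f)
    (hlip : ∀ x y, ‖gradient f x - gradient f y‖ ≤ L * ‖x - y‖)
    (C : Set (EuclideanSpace ℝ (Fin n × Fin m))) (hconv : Convex ℝ C)
    (hC : ∀ ρ ∈ C, (∀ p, 0 ≤ ρ p) ∧ ∑ p, ρ p = 1)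
    (π πplus : EuclideanSpace ℝ (Fin n × Fin m))
    (hπ : π ∈ C) (hπpos : ∀ p, 0 < π p)
    (η : ℝ) (hη : 0 < η) (hmem : πplus ∈ C)
    (hmin : ∀ ρ ∈ C,
      ⟪gradient f π, πplus⟫ + (1 / η) * vecKL πplus π
        ≤ ⟪gradient f π, ρ⟫ + (1 / η) * vecKL ρ π) :
    f π - f πplus ≥ (1 / (2 * η) - L / 2) * ‖πplus - π‖ ^ 2 ∧
    (η < 1 / L → πplus ≠ π → f πplus < f π) := by
  obtain ⟨hπnn, hπsum⟩ := hC π hπ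
  obtain ⟨hpnn, hpsum⟩ := hC πplus hmem
  -- entries are at most 1
  have hπle : ∀ p, π p ≤ 1 := by
    intro p
    rw [← hπsum]
    exact Finset.single_le_sum (fun q _ => hπnn q) (Finset.mem_univ p)
  have hple : ∀ p, πplus p ≤ 1 := by
    intro p
    rw [← hpsum]
    exact Finset.single_le_sum (fun q _ => hpnn q) (Finset.mem_univ p)
  -- KL(π‖π) = 0
  have hKLself : vecKL π π = 0 := by
    unfold vecKL
    apply Finset.sum_eq_zero
    intro p _
    rw [div_self (hπpos p).ne']
    simp
  -- norm squared as a sum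
  have hnorm : ‖πplus - π‖ ^ 2 = ∑ p, (πplus p - π p) ^ 2 := by
    rw [EuclideanSpace.norm_eq]
    rw [Real.sq_sqrt (Finset.sum_nonneg fun p _ => sq_nonneg _)]
    congr 1
    funext p
    rw [Real.norm_eq_abs, sq_abs]
    rfl
  -- Pinsker-type bound
  have hKL : (1 / 2) * ‖πplus - π‖ ^ 2 ≤ vecKL πplus π := by
    rw [hnorm, Finset.mul_sum]
    unfold vecKL
    apply Finset.sum_le_sum
    intro p _
    have := kl_pointwise (hpnn p) (hple p) (hπpos p) (hπle p)
    calc 1 / 2 * (πplus p - π p) ^ 2 = (πplus p - π p) ^ 2 / 2 := by ring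
      _ ≤ _ := this
  -- minimality at π
  have hmin' := hmin π hπ
  rw [hKLself, mul_zero, add_zero] at hmin'
  have hinner : ⟪gradient f π, πplus - π⟫ ≤ -(1 / η) * vecKL πplus π := by
    rw [inner_sub_right]
    linarith
  -- descent lemma
  have hdesc := descent_lemma f L hL hdiff hlip π πplus
  have hKLpos : (1 / η) * vecKL πplus π ≥ (1 / η) * ((1 / 2) * ‖πplus - π‖ ^ 2) := by
    apply mul_le_mul_of_nonneg_left hKL (by positivity)
  have hmain : f π - f πplus ≥ (1 / (2 * η) - L / 2) * ‖πplus - π‖ ^ 2 := by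
    have h1 : f πplus ≤ f π + ⟪gradient f π, πplus - π⟫ + L / 2 * ‖πplus - π‖ ^ 2 := hdesc
    have h2 : ⟪gradient f π, πplus - π⟫ ≤ -(1 / η) * ((1 / 2) * ‖πplus - π‖ ^ 2) := by
      calc ⟪gradient f π, πplus - π⟫ ≤ -(1 / η) * vecKL πplus π := hinner
        _ ≤ -(1 / η) * ((1 / 2) * ‖πplus - π‖ ^ 2) := by nlinarith
    have heq : -(1 / η) * ((1 / 2) * ‖πplus - π‖ ^ 2) + L / 2 * ‖πplus - π‖ ^ 2
        = -((1 / (2 * η) - L / 2) * ‖πplus - π‖ ^ 2) := by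
      field_simp [hη.ne']
      ring
    nlinarith
  refine ⟨hmain, ?_⟩
  intro hηL hne
  have hηL' : L < 1 / η := by
    rw [lt_div_iff₀ hη]
    rw [lt_div_iff₀ hL] at hηL
    linarith
  have hcoef : 0 < 1 / (2 * η) - L / 2 := by
    rw [sub_pos]
    rw [div_lt_div_iff₀ (by norm_num) (by positivity)]
    rw [lt_div_iff₀ hη] at hηL'
    linarith
  have hnormpos : 0 < ‖πplus - π‖ ^ 2 := by
    have h0 : πplus - π ≠ 0 := sub_ne_zero_of_ne hne
    have h1 : 0 < ‖πplus - π‖ := norm_pos_iff.mpr h0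
    positivity
  nlinarith
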